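/- For nonnegative reals z_k(i) with ∑_{i=0}^k z_k(i)² ≤ δ for each k = 1,…,n, the value ∑_{i=0}^{n−1} (1/(n−i+1))² (∑_{k=i+1}^n z_k(i))² is at most (δ/2)·log(n+1). -/

import Mathlib

open Finset

lemma two_mul_sub_div_le_log (x : ℝ) (hx : 1 ≤ x) : 2 * (x - 1) / (x + 1) ≤ Real.log x := by
  have key : MonotoneOn (fun x : ℝ => (x + 1) * Real.log x - 2 * (x - 1)) (Set.Ici 1) := by
    have hder : ∀ x : ℝ, 0 < x → HasDerivAt (fun x : ℝ => (x + 1) * Real.log x - 2 * (x - 1))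
        (1 * Real.log x + (x + 1) * x⁻¹ - 2 * 1) x := by
      intro x hx0
      exact (((hasDerivAt_id x).add_const 1).mul (Real.hasDerivAt_log hx0.ne')).sub
        (((hasDerivAt_id x).sub_const 1).const_mul 2)
    apply monotoneOn_of_deriv_nonneg (convex_Ici 1)
    · apply ContinuousOn.sub
      · exact (continuousOn_id.add continuousOn_const).mul
          (Real.continuousOn_log.mono (by intro x hx; simp at hx ⊢; linarith))
      · fun_prop
    · intro x hx
      rw [interior_Ici] at hx
      have hx0 : (0:ℝ) < x := lt_trans one_pos hx
      exact (hder x hx0).differentiableAt.differentiableWithinAt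
    · intro x hx
      rw [interior_Ici] at hx
      have hx0 : (0:ℝ) < x := lt_trans one_pos hx
      rw [(hder x hx0).deriv]
      have hlog : 1 - x⁻¹ ≤ Real.log x := by
        have h := Real.log_le_sub_one_of_pos (inv_pos.mpr hx0)
        rw [Real.log_inv] at h
        linarith
      have hxi : (x + 1) * x⁻¹ = 1 + x⁻¹ := by field_simp
      rw [hxi]
      linarith
  have h := key (Set.mem_Ici.mpr le_rfl) (Set.mem_Ici.mpr hx) hx
  simp only [Real.log_one, mul_zero, sub_zero, sub_self, mul_zero] at h
  rw [div_le_iff₀ (by linarith : (0:ℝ) < x + 1)]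
  nlinarith [h]

lemma log_step (a : ℝ) (ha : 1 ≤ a) : 2 / (2 * a + 1) ≤ Real.log (a + 1) - Real.log a := by
  have ha0 : (0:ℝ) < a := lt_of_lt_of_le one_pos ha
  have ht : (1:ℝ) ≤ (a + 1) / a := by rw [le_div_iff₀ ha0]; linarith
  have h := two_mul_sub_div_le_log _ ht
  rw [Real.log_div (by linarith) ha0.ne'] at h
  have h1 : ((a + 1) / a - 1) = 1 / a := by field_simp; ring
  have h2 : ((a + 1) / a + 1) = (2 * a + 1) / a := by field_simp; ring
  rw [h1, h2] at h
  have ha1 : (2 * a + 1) ≠ 0 := by positivity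
  have : 2 * (1 / a) / ((2 * a + 1) / a) = 2 / (2 * a + 1) := by
    field_simp
  linarith [this ▸ h]

lemma harm_le (n : ℕ) : ∑ j ∈ range n, (1:ℝ) / (2 * j + 3) ≤ 1 / 2 * Real.log (n + 1) := by
  induction n with
  | zero => simp
  | succ m ih =>
    rw [sum_range_succ]
    have h := log_step ((m:ℝ) + 1) (by have := Nat.cast_nonneg (α := ℝ) m; linarith)
    have e1 : (2 * ((m:ℝ) + 1) + 1) = 2 * (m:ℝ) + 3 := by ring
    have e2 : ((m:ℝ) + 1 + 1) = ((m+1:ℕ):ℝ) + 1 := by push_cast; ring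
    rw [e1, e2] at h
    have : (1:ℝ) / (2 * (m:ℝ) + 3) = (2 / (2 * (m:ℝ) + 3)) / 2 := by ring
    rw [this]
    linarith

lemma sum_odd (M : ℕ) : ∑ m ∈ range M, (2 * (m:ℝ) + 3) = (M:ℝ)^2 + 2 * M := by
  induction M with
  | zero => simp
  | succ m ih => rw [sum_range_succ, ih]; push_cast; ring

lemma reindex_sum (n i : ℕ) (f : ℕ → ℝ) :
    ∑ k ∈ Icc (i + 1) n, f (n - k) = ∑ m ∈ range (n - i), f m := by
  apply Finset.sum_nbij' (fun k => n - k) (fun m => n - m)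
  · intro k hk; rw [mem_Icc] at hk; rw [mem_range]; omega
  · intro m hm; rw [mem_range] at hm; rw [mem_Icc]; omega
  · intro k hk; rw [mem_Icc] at hk; omega
  · intro m hm; rw [mem_range] at hm; omega
  · intro k hk; rfl

/-- Combined primal-dual bound: for nonnegative `z_k(i)` with `∑_{i=0}^k z_k(i)² ≤ δ`
for each `k = 1,…,n`, the primal objective is at most `(δ/2)·log(n+1)`. -/
theorem primal_le_log_bound (n : ℕ) (hn : 1 ≤ n) (δ : ℝ) (hδ : 0 < δ) (z : ℕ → ℕ → ℝ)
    (hz : ∀ k ∈ Icc 1 n, ∀ i ∈ Icc 0 k, 0 ≤ z k i)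
    (hcon : ∀ k ∈ Icc 1 n, ∑ i ∈ Icc 0 k, (z k i) ^ 2 ≤ δ) :
    ∑ i ∈ range n, (1 / ((n : ℝ) - (i : ℝ) + 1)) ^ 2 * (∑ k ∈ Icc (i + 1) n, z k i) ^ 2 ≤
      (δ / 2) * Real.log (n + 1) := by
  set w : ℕ → ℝ := fun k => 2 * ((n - k : ℕ) : ℝ) + 3 with hw
  have hwpos : ∀ k, 0 < w k := by intro k; rw [hw]; positivity
  -- Step 1: Cauchy-Schwarz per i
  have step1 : ∀ i ∈ range n,
      (1 / ((n : ℝ) - (i : ℝ) + 1)) ^ 2 * (∑ k ∈ Icc (i + 1) n, z k i) ^ 2 ≤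
        ∑ k ∈ Icc (i + 1) n, (z k i) ^ 2 / w k := by
    intro i hi
    rw [mem_range] at hi
    have hsumw : ∑ k ∈ Icc (i + 1) n, w k = ((n - i : ℕ) : ℝ) ^ 2 + 2 * ((n - i : ℕ) : ℝ) := by
      have := reindex_sum n i (fun m => 2 * (m : ℝ) + 3)
      rw [hw]
      simpa [sum_odd] using this
    have hT : 0 ≤ ∑ k ∈ Icc (i + 1) n, (z k i) ^ 2 / w k :=
      Finset.sum_nonneg fun k _ => div_nonneg (sq_nonneg _) (hwpos k).le
    have hcs : (∑ k ∈ Icc (i + 1) n, z k i) ^ 2 ≤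
        (∑ k ∈ Icc (i + 1) n, w k) * (∑ k ∈ Icc (i + 1) n, (z k i) ^ 2 / w k) := by
      apply Finset.sum_sq_le_sum_mul_sum_of_sq_eq_mul
      · intro k _; exact (hwpos k).le
      · intro k _; exact div_nonneg (sq_nonneg _) (hwpos k).le
      · intro k _; exact (mul_div_cancel₀ _ (hwpos k).ne').symm
    set M : ℝ := ((n - i : ℕ) : ℝ) with hM
    have hM0 : 0 ≤ M := Nat.cast_nonneg _
    have hni : (n : ℝ) - (i : ℝ) + 1 = M + 1 := by
      rw [hM, Nat.cast_sub hi.le]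
    rw [hni]
    calc (1 / (M + 1)) ^ 2 * (∑ k ∈ Icc (i + 1) n, z k i) ^ 2
        ≤ (1 / (M + 1)) ^ 2 * ((M ^ 2 + 2 * M) * ∑ k ∈ Icc (i + 1) n, (z k i) ^ 2 / w k) := by
          have hcs' : (∑ k ∈ Icc (i + 1) n, z k i) ^ 2 ≤
              (M ^ 2 + 2 * M) * ∑ k ∈ Icc (i + 1) n, (z k i) ^ 2 / w k := by
            rw [← hsumw]; exact hcs
          exact mul_le_mul_of_nonneg_left hcs' (by positivity)
      _ = (M ^ 2 + 2 * M) * (∑ k ∈ Icc (i + 1) n, (z k i) ^ 2 / w k) / (M + 1) ^ 2 := by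
          field_simp
      _ ≤ ∑ k ∈ Icc (i + 1) n, (z k i) ^ 2 / w k := by
          rw [div_le_iff₀ (by positivity)]
          nlinarith
  -- Sum up and swap
  have swap : ∑ i ∈ range n, ∑ k ∈ Icc (i + 1) n, (z k i) ^ 2 / w k
      = ∑ k ∈ Icc 1 n, ∑ i ∈ range k, (z k i) ^ 2 / w k := by
    apply Finset.sum_comm'
    intro i k
    simp only [mem_range, mem_Icc]
    omega
  have step3 : ∀ k ∈ Icc 1 n, ∑ i ∈ range k, (z k i) ^ 2 / w k ≤ δ / w k := by
    intro k hk
    rw [← Finset.sum_div, div_le_div_iff_of_pos_right (hwpos k)]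
    calc ∑ i ∈ range k, (z k i) ^ 2 ≤ ∑ i ∈ Icc 0 k, (z k i) ^ 2 := by
          apply Finset.sum_le_sum_of_subset_of_nonneg
          · intro x hx; rw [mem_range] at hx; rw [mem_Icc]; omega
          · intro x _ _; exact sq_nonneg _
      _ ≤ δ := hcon k hk
  have step4 : ∑ k ∈ Icc 1 n, δ / w k = ∑ j ∈ range n, δ / (2 * (j : ℝ) + 3) := by
    have := reindex_sum n 0 (fun m => δ / (2 * (m : ℝ) + 3))
    simpa [hw] using this
  calc ∑ i ∈ range n, (1 / ((n : ℝ) - (i : ℝ) + 1)) ^ 2 * (∑ k ∈ Icc (i + 1) n, z k i) ^ 2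
      ≤ ∑ i ∈ range n, ∑ k ∈ Icc (i + 1) n, (z k i) ^ 2 / w k := Finset.sum_le_sum step1
    _ = ∑ k ∈ Icc 1 n, ∑ i ∈ range k, (z k i) ^ 2 / w k := swap
    _ ≤ ∑ k ∈ Icc 1 n, δ / w k := Finset.sum_le_sum step3
    _ = ∑ j ∈ range n, δ / (2 * (j : ℝ) + 3) := step4
    _ = δ * ∑ j ∈ range n, (1 : ℝ) / (2 * (j : ℝ) + 3) := by
        rw [Finset.mul_sum]; apply Finset.sum_congr rfl; intro j _; ring
    _ ≤ δ * (1 / 2 * Real.log (n + 1)) :=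
        mul_le_mul_of_nonneg_left (harm_le n) hδ.le
    _ = (δ / 2) * Real.log (n + 1) := by ring
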